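/- Let e ∈ A be invertible and set κ := λ⁻¹ν⁻¹(q−e)(q⁻¹+e). If e·κ = κ·e = ν·κ, then κ = λ⁻¹(e⁻¹ − e + λ·1) and κ² = μ·κ. -/
import Mathlib


namespace BMWPaper

noncomputable section

/-- `κ_u := λ⁻¹ ν⁻¹ (q - u)(q⁻¹ + u)` for an invertible element `u` of a ℂ-algebra,
where `λ := q - q⁻¹`. -/
def kap (q ν : ℂ) {A : Type*} [Ring A] [Algebra ℂ A] (u : Aˣ) : A :=
  ((q - q⁻¹)⁻¹ * ν⁻¹) • ((q • (1 : A) - (u : A)) * (q⁻¹ • (1 : A) + (u : A)))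

/-- `μ := λ⁻¹ ν⁻¹ (q - ν)(q⁻¹ + ν)`. -/
def muBMW (q ν : ℂ) : ℂ := ((q - q⁻¹)⁻¹ * ν⁻¹) * ((q - ν) * (q⁻¹ + ν))

/-- A local BMW pair `(e, f)` of invertible elements of a ℂ-algebra `A`:
`efe = fef`, `e κ_e = κ_e e = ν κ_e`, `f κ_f = κ_f f = ν κ_f`,
`κ_f e κ_f = ν⁻¹ κ_f` and `κ_f e⁻¹ κ_f = ν κ_f`. -/
def LocalBMWPair (q ν : ℂ) {A : Type*} [Ring A] [Algebra ℂ A] (e f : Aˣ) : Prop :=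
  (e : A) * f * e = (f : A) * e * f ∧
  (e : A) * kap q ν e = ν • kap q ν e ∧
  kap q ν e * e = ν • kap q ν e ∧
  (f : A) * kap q ν f = ν • kap q ν f ∧
  kap q ν f * f = ν • kap q ν f ∧
  kap q ν f * e * kap q ν f = ν⁻¹ • kap q ν f ∧
  kap q ν f * (↑e⁻¹ : A) * kap q ν f = ν • kap q ν f

/-- if `e κ = κ e = ν κ` for `κ := λ⁻¹ν⁻¹(q-e)(q⁻¹+e)`, then
`κ = λ⁻¹(e⁻¹ - e + λ·1)` and `κ² = μ κ`. -/
theorem stmt0 (q ν : ℂ) (hq0 : q ≠ 0) (hq1 : q ≠ 1) (hqm1 : q ≠ -1)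
    (hν0 : ν ≠ 0) (hνq : ν ≠ q) (hνq' : ν ≠ -q⁻¹)
    (A : Type*) [Ring A] [Algebra ℂ A]
    (e : Aˣ)
    (h1 : (e : A) * kap q ν e = ν • kap q ν e)
    (h2 : kap q ν e * e = ν • kap q ν e) :
    kap q ν e = (q - q⁻¹)⁻¹ • ((↑e⁻¹ : A) - (e : A) + (q - q⁻¹) • (1 : A)) ∧
    kap q ν e * kap q ν e = muBMW q ν • kap q ν e := by
  have hlam : q - q⁻¹ ≠ 0 := by
    intro h
    have h' : q * q = 1 := by
      field_simp at h
      linear_combination h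
    rcases mul_self_eq_one_iff.mp h' with h | h
    · exact hq1 h
    · exact hqm1 h
  have hinv : (↑e⁻¹ : A) * (e : A) = 1 := e.inv_mul
  have hinv' : (e : A) * (↑e⁻¹ : A) = 1 := e.mul_inv
  have hqq : q * q⁻¹ = 1 := mul_inv_cancel₀ hq0
  have hνν : ν * ν⁻¹ = 1 := mul_inv_cancel₀ hν0
  have hek : (↑e⁻¹ : A) * kap q ν e
      = ((q - q⁻¹)⁻¹ * ν⁻¹) • ((↑e⁻¹ : A) - (e : A) + (q - q⁻¹) • 1) := by
    unfold kap
    rw [mul_smul_comm]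
    congr 1
    simp only [mul_add, mul_sub, add_mul, sub_mul, smul_mul_assoc, mul_smul_comm,
      mul_one, one_mul, smul_smul, hinv, hqq, ← mul_assoc]
    match_scalars <;> field_simp <;> ring
  have key1 : kap q ν e = (q - q⁻¹)⁻¹ • ((↑e⁻¹ : A) - (e : A) + (q - q⁻¹) • (1 : A)) := by
    have step : kap q ν e = ν • ((↑e⁻¹ : A) * kap q ν e) := by
      rw [← mul_smul_comm, ← h1, ← mul_assoc, hinv, one_mul]
    rw [step, hek, smul_smul]
    congr 1
    rw [mul_comm (q - q⁻¹)⁻¹, ← mul_assoc, hνν, one_mul]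
  refine ⟨key1, ?_⟩
  have hke : kap q ν e * (↑e⁻¹ : A) = ν⁻¹ • kap q ν e := by
    have : kap q ν e = ν • (kap q ν e * (↑e⁻¹ : A)) := by
      rw [← smul_mul_assoc, ← h2, mul_assoc, hinv', mul_one]
    rw [this, smul_smul, inv_mul_cancel₀ hν0, one_smul, ← this]
  calc kap q ν e * kap q ν e
      = (q - q⁻¹)⁻¹ • (kap q ν e * ((↑e⁻¹ : A) - (e : A) + (q - q⁻¹) • (1 : A))) := by
        nth_rewrite 2 [key1]
        rw [mul_smul_comm]
    _ = (q - q⁻¹)⁻¹ • (ν⁻¹ • kap q ν e - ν • kap q ν e + (q - q⁻¹) • kap q ν e) := by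
        rw [mul_add, mul_sub, hke, h2, mul_smul_comm, mul_one]
    _ = muBMW q ν • kap q ν e := by
        rw [← sub_smul, ← add_smul, smul_smul]
        congr 1
        unfold muBMW
        field_simp
        ring
  done

end

end BMWPaper
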